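/- arXiv:1912.07549 — 4 statements merged into one kernel-verified Lean document; each statement's English description precedes it below -/
import Mathlib

section
/- If the index type E is finite, then the path pseudometric d_G is a (generalized) metric on G: for all ξ, θ ∈ G, d_G(ξ, θ) = 0 implies ξ = θ. -/
open scoped ENNReal

/-- The extended distance on the disjoint union `Σ e, [0, ℓ e]`. -/
noncomputable def dE {E : Type*} (ℓ : E → ℝ)
    (p q : Σ e : E, Set.Icc (0 : ℝ) (ℓ e)) : ℝ≥0∞ :=
  open Classical in
  if p.1 = q.1 then ENNReal.ofReal |p.2.1 - q.2.1| else ⊤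

/-- The set of endpoints of the intervals. -/
def Vset {E : Type*} (ℓ : E → ℝ) : Set (Σ e : E, Set.Icc (0 : ℝ) (ℓ e)) :=
  {p | p.2.1 = 0 ∨ p.2.1 = ℓ p.1}

/-- The path pseudometric on the metric graph `G = 𝓔/∼`: the infimum over all chains
`ξ₁,…,ξ_k, θ₁,…,θ_k` (here of length `k+1`, covering all `k ≥ 1`) with `q ξ₁ = ξ`,
`q θ_k = θ` and `θ_i ∼ ξ_{i+1}`, of `Σ_i dE ξ_i θ_i`. -/
noncomputable def dG {E : Type*} (ℓ : E → ℝ)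
    (r : Setoid (Σ e : E, Set.Icc (0 : ℝ) (ℓ e)))
    (ξ θ : Quotient r) : ℝ≥0∞ :=
  ⨅ (k : ℕ) (a : Fin (k + 1) → Σ e : E, Set.Icc (0 : ℝ) (ℓ e))
    (b : Fin (k + 1) → Σ e : E, Set.Icc (0 : ℝ) (ℓ e))
    (_ : Quotient.mk r (a 0) = ξ) (_ : Quotient.mk r (b (Fin.last k)) = θ)
    (_ : ∀ i : Fin k, r (b i.castSucc) (a i.succ)),
    ∑ i, dE ℓ (a i) (b i)


private lemma sig_eq {E : Type*} {ℓ : E → ℝ} {w v : Σ e : E, Set.Icc (0 : ℝ) (ℓ e)}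
    (h1 : w.1 = v.1) (h2 : w.2.1 = v.2.1) : w = v := by
  obtain ⟨e, x⟩ := w
  obtain ⟨f, y⟩ := v
  dsimp at h1 h2
  subst h1
  exact congrArg _ (Subtype.ext h2)

/-- If the edge set is finite, the path pseudometric is a (generalized) metric. -/
theorem stmt3 {E : Type*} [Finite E] (ℓ : E → ℝ) (hℓ : ∀ e, 0 < ℓ e)
    (r : Setoid (Σ e : E, Set.Icc (0 : ℝ) (ℓ e)))
    (hr : ∀ p q, r p q → p = q ∨ (p ∈ Vset ℓ ∧ q ∈ Vset ℓ)) :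
    ∀ ξ θ : Quotient r, dG ℓ r ξ θ = 0 → ξ = θ := by
  classical
  intro ξ θ h0
  induction ξ using Quotient.ind with | _ p => ?_
  induction θ using Quotient.ind with | _ q => ?_
  -- define the threshold δ
  set δℓ : ℝ≥0∞ := ⨅ e, ENNReal.ofReal (ℓ e) with hδℓ
  set δp : ℝ≥0∞ := (if p.2.1 = 0 then ⊤ else ENNReal.ofReal p.2.1) ⊓
      (if p.2.1 = ℓ p.1 then ⊤ else ENNReal.ofReal (ℓ p.1 - p.2.1)) with hδp
  set δq : ℝ≥0∞ := (if q.2.1 = 0 then ⊤ else ENNReal.ofReal q.2.1) ⊓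
      (if q.2.1 = ℓ q.1 then ⊤ else ENNReal.ofReal (ℓ q.1 - q.2.1)) with hδq
  set δpq : ℝ≥0∞ := if p.1 = q.1 ∧ p ≠ q then ENNReal.ofReal |p.2.1 - q.2.1| else ⊤ with hδpq
  set δ : ℝ≥0∞ := δℓ ⊓ δp ⊓ δq ⊓ δpq with hδ
  have hδℓpos : 0 < δℓ := by
    cases isEmpty_or_nonempty E with
    | inl h => rw [hδℓ, iInf_of_empty]; exact ENNReal.zero_lt_top
    | inr h =>
      obtain ⟨e₀, he₀⟩ := Finite.exists_min fun e => ENNReal.ofReal (ℓ e)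
      exact lt_of_lt_of_le (ENNReal.ofReal_pos.mpr (hℓ e₀)) (le_iInf he₀)
  have hendpos : ∀ (x : Set.Icc (0:ℝ) (ℓ p.1)) (c : ℝ), True → True := fun _ _ _ => trivial
  have hpt : ∀ (w : Σ e : E, Set.Icc (0 : ℝ) (ℓ e)),
      0 < ((if w.2.1 = 0 then ⊤ else ENNReal.ofReal w.2.1) ⊓
      (if w.2.1 = ℓ w.1 then ⊤ else ENNReal.ofReal (ℓ w.1 - w.2.1)) : ℝ≥0∞) := by
    intro w
    rw [lt_inf_iff]
    constructor
    · split
      · exact ENNReal.zero_lt_top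
      · exact ENNReal.ofReal_pos.mpr (lt_of_le_of_ne w.2.2.1 (Ne.symm ‹_›))
    · split
      · exact ENNReal.zero_lt_top
      · exact ENNReal.ofReal_pos.mpr (by have := w.2.2.2; have := ‹w.2.1 ≠ ℓ w.1›; linarith [lt_of_le_of_ne w.2.2.2 ‹w.2.1 ≠ ℓ w.1›])
  have hδpos : 0 < δ := by
    rw [hδ, lt_inf_iff, lt_inf_iff, lt_inf_iff]
    refine ⟨⟨⟨hδℓpos, hpt p⟩, hpt q⟩, ?_⟩
    rw [hδpq]
    split
    · refine ENNReal.ofReal_pos.mpr (abs_pos.mpr (sub_ne_zero.mpr ?_))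
      intro hcc
      exact ‹p.1 = q.1 ∧ p ≠ q›.2 (sig_eq ‹p.1 = q.1 ∧ p ≠ q›.1 hcc)
    · exact ENNReal.zero_lt_top
  have hδtop : δ < ⊤ := by
    have : δp < ⊤ := by
      rw [hδp]
      by_cases h0' : p.2.1 = 0
      · have : p.2.1 ≠ ℓ p.1 := by have := hℓ p.1; rw [h0']; linarith
        exact lt_of_le_of_lt inf_le_right (by rw [if_neg this]; exact ENNReal.ofReal_lt_top)
      · exact lt_of_le_of_lt inf_le_left (by rw [if_neg h0']; exact ENNReal.ofReal_lt_top)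
    exact lt_of_le_of_lt (le_trans inf_le_left (le_trans inf_le_left inf_le_right)) this
  have hδle_ℓ : ∀ e, δ ≤ ENNReal.ofReal (ℓ e) := fun e =>
    le_trans (le_trans inf_le_left (le_trans inf_le_left inf_le_left)) (iInf_le _ e)
  have hδle_p : δ ≤ δp := le_trans inf_le_left (le_trans inf_le_left inf_le_right)
  have hδle_q : δ ≤ δq := le_trans inf_le_left inf_le_right
  have hδle_pq : δ ≤ δpq := inf_le_right
  -- extract a chain of length < δ
  have hlt : dG ℓ r (Quotient.mk r p) (Quotient.mk r q) < δ := h0 ▸ hδpos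
  rw [dG] at hlt
  simp only [iInf_lt_iff] at hlt
  obtain ⟨k, a, b, h1, h2, h3, hsum⟩ := hlt
  set S : ℝ≥0∞ := ∑ i, dE ℓ (a i) (b i) with hS
  have hterm : ∀ i : Fin (k+1), dE ℓ (a i) (b i) ≤ S :=
    fun i => Finset.single_le_sum (f := fun j => dE ℓ (a j) (b j)) (fun _ _ => zero_le) (Finset.mem_univ i)
  have hfst : ∀ i : Fin (k+1), (a i).1 = (b i).1 := by
    intro i
    by_contra hne
    have : dE ℓ (a i) (b i) = ⊤ := by rw [dE, if_neg hne]
    exact absurd (lt_of_le_of_lt (this ▸ hterm i) (lt_trans hsum hδtop)) (lt_irrefl _)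
  have hdE : ∀ i : Fin (k+1), dE ℓ (a i) (b i) = ENNReal.ofReal |(a i).2.1 - (b i).2.1| := by
    intro i; rw [dE, if_pos (hfst i)]
  -- vertex-vertex rigidity
  have hvv : ∀ w v : Σ e : E, Set.Icc (0 : ℝ) (ℓ e), w ∈ Vset ℓ → v ∈ Vset ℓ →
      v.1 = w.1 → ENNReal.ofReal |w.2.1 - v.2.1| < δ → w = v := by
    intro w v hw hv h1' hlt'
    have hlt'' : ENNReal.ofReal |w.2.1 - v.2.1| < ENNReal.ofReal (ℓ w.1) :=
      lt_of_lt_of_le hlt' (hδle_ℓ w.1)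
    have habs : |w.2.1 - v.2.1| < ℓ w.1 :=
      lt_of_lt_of_le (by exact_mod_cast (ENNReal.ofReal_lt_ofReal_iff_of_nonneg (abs_nonneg _)).mp hlt'') le_rfl
    have hvℓ : v.2.1 = 0 ∨ v.2.1 = ℓ w.1 := by
      rcases hv with h | h
      · exact Or.inl h
      · exact Or.inr (by rw [h, h1'])
    refine sig_eq (h1'.symm) ?_
    rcases hw with hw0 | hwl <;> rcases hvℓ with hv0 | hvl
    · rw [hw0, hv0]
    · exfalso
      rw [hw0, hvl, zero_sub, abs_neg, abs_of_nonneg (hℓ w.1).le] at habs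
      exact absurd habs (lt_irrefl _)
    · exfalso
      rw [hwl, hv0, sub_zero, abs_of_nonneg (hℓ w.1).le] at habs
      exact absurd habs (lt_irrefl _)
    · rw [hwl, hvl]
  -- key rigidity for points related to p
  have key : ∀ w v : Σ e : E, Set.Icc (0 : ℝ) (ℓ e), w ∈ Vset ℓ → v.1 = w.1 →
      ENNReal.ofReal |w.2.1 - v.2.1| < δ → r v p → w = v := by
    intro w v hw h1' hlt' hvp
    rcases hr v p hvp with heq | ⟨hvV, _⟩
    · subst heq
      by_cases hpV : v ∈ Vset ℓ
      · exact hvv w v hw hpV h1' hlt'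
      · exfalso
        have hne0 : v.2.1 ≠ 0 := fun h => hpV (Or.inl h)
        have hneℓ : v.2.1 ≠ ℓ v.1 := fun h => hpV (Or.inr h)
        have hlt2 : ENNReal.ofReal |w.2.1 - v.2.1| < δp := lt_of_lt_of_le hlt' hδle_p
        rcases hw with hw0 | hwl
        · have hb : δp ≤ ENNReal.ofReal v.2.1 := le_trans inf_le_left (by rw [if_neg hne0])
          refine absurd (lt_of_lt_of_le hlt2 hb) (not_lt.mpr (ENNReal.ofReal_le_ofReal ?_))
          rw [hw0, zero_sub, abs_neg, abs_of_nonneg v.2.2.1]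
        · have hb : δp ≤ ENNReal.ofReal (ℓ v.1 - v.2.1) :=
            le_trans inf_le_right (by rw [if_neg hneℓ])
          refine absurd (lt_of_lt_of_le hlt2 hb) (not_lt.mpr (ENNReal.ofReal_le_ofReal ?_))
          have hwv : w.2.1 = ℓ v.1 := hwl.trans (congrArg ℓ h1'.symm)
          rw [hwv, abs_of_nonneg (sub_nonneg.mpr v.2.2.2)]
    · exact hvv w v hw hvV h1' hlt'
  -- partial sums
  set f : ℕ → ℝ≥0∞ := fun j => if h : j < k + 1 then dE ℓ (a ⟨j, h⟩) (b ⟨j, h⟩) else 0 with hf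
  have hfS : ∑ j ∈ Finset.range (k+1), f j = S := by
    rw [← Fin.sum_univ_eq_sum_range f (k+1), hS]
    refine Finset.sum_congr rfl fun i _ => ?_
    simp only [hf, i.isLt, dif_pos, Fin.eta]
  have hpsle : ∀ n, n ≤ k + 1 → ∑ j ∈ Finset.range n, f j ≤ S := by
    intro n hn
    rw [← hfS]
    exact Finset.sum_le_sum_of_subset (Finset.range_subset_range.mpr hn)
  have main : ∀ n, ∀ hn : n < k + 1, ∃ v, r v p ∧ v.1 = (a ⟨n, hn⟩).1 ∧
      ENNReal.ofReal |(a ⟨n, hn⟩).2.1 - v.2.1| ≤ ∑ j ∈ Finset.range n, f j := by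
    intro n
    induction n with
    | zero =>
      intro hn
      exact ⟨a ⟨0, hn⟩, Quotient.exact h1, rfl, by simp⟩
    | succ n ih =>
      intro hn
      have hn' : n < k + 1 := Nat.lt_of_succ_lt hn
      obtain ⟨v, hvp, hv1, hvb⟩ := ih hn'
      have hnk : n < k := Nat.succ_lt_succ_iff.mp hn
      have hch := h3 ⟨n, hnk⟩
      have hcs : (⟨n, hnk⟩ : Fin k).castSucc = ⟨n, hn'⟩ := rfl
      have hsc : (⟨n, hnk⟩ : Fin k).succ = ⟨n + 1, hn⟩ := rfl
      rw [hcs, hsc] at hch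
      have hfn : f n = ENNReal.ofReal |(a ⟨n, hn'⟩).2.1 - (b ⟨n, hn'⟩).2.1| := by
        simp only [hf, hn', dif_pos]
        exact hdE _
      have hb1 : v.1 = (b ⟨n, hn'⟩).1 := hv1.trans (hfst _)
      have hbb : ENNReal.ofReal |(b ⟨n, hn'⟩).2.1 - v.2.1| ≤ ∑ j ∈ Finset.range (n+1), f j := by
        rw [Finset.sum_range_succ]
        calc ENNReal.ofReal |(b ⟨n, hn'⟩).2.1 - v.2.1|
            ≤ ENNReal.ofReal (|(a ⟨n, hn'⟩).2.1 - v.2.1| + |(a ⟨n, hn'⟩).2.1 - (b ⟨n, hn'⟩).2.1|) := by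
              refine ENNReal.ofReal_le_ofReal ?_
              calc |(b ⟨n, hn'⟩).2.1 - v.2.1|
                  ≤ |(b ⟨n, hn'⟩).2.1 - (a ⟨n, hn'⟩).2.1| + |(a ⟨n, hn'⟩).2.1 - v.2.1| :=
                    abs_sub_le _ _ _
                _ = |(a ⟨n, hn'⟩).2.1 - v.2.1| + |(a ⟨n, hn'⟩).2.1 - (b ⟨n, hn'⟩).2.1| := by
                    rw [abs_sub_comm]; ring
          _ = ENNReal.ofReal |(a ⟨n, hn'⟩).2.1 - v.2.1|
              + ENNReal.ofReal |(a ⟨n, hn'⟩).2.1 - (b ⟨n, hn'⟩).2.1| :=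
              ENNReal.ofReal_add (abs_nonneg _) (abs_nonneg _)
          _ ≤ ∑ j ∈ Finset.range n, f j + f n := add_le_add hvb (le_of_eq hfn.symm)
      rcases hr _ _ hch with heq | ⟨hbV, _⟩
      · refine ⟨v, hvp, ?_, ?_⟩
        · rw [← heq]; exact hb1
        · rw [← heq]; exact hbb
      · have hblt : ENNReal.ofReal |(b ⟨n, hn'⟩).2.1 - v.2.1| < δ :=
          lt_of_le_of_lt (le_trans hbb (hpsle _ (by omega))) hsum
        have hbv : b ⟨n, hn'⟩ = v := key _ _ hbV hb1 hblt hvp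
        have hbp : r (b ⟨n, hn'⟩) p := by rw [hbv]; exact hvp
        exact ⟨a ⟨n + 1, hn⟩, Setoid.trans (Setoid.symm hch) hbp, rfl, by simp⟩
  -- endgame
  obtain ⟨v, hvp, hv1, hvb⟩ := main k (Nat.lt_succ_self k)
  have hkk : (Fin.last k) = ⟨k, Nat.lt_succ_self k⟩ := rfl
  have hb1 : v.1 = (b ⟨k, Nat.lt_succ_self k⟩).1 := hv1.trans (hfst _)
  have hfn : f k = ENNReal.ofReal |(a ⟨k, Nat.lt_succ_self k⟩).2.1 - (b ⟨k, Nat.lt_succ_self k⟩).2.1| := by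
    simp only [hf, Nat.lt_succ_self k, dif_pos]
    exact hdE _
  have hbb : ENNReal.ofReal |(b ⟨k, Nat.lt_succ_self k⟩).2.1 - v.2.1| ≤ ∑ j ∈ Finset.range (k+1), f j := by
    rw [Finset.sum_range_succ]
    calc ENNReal.ofReal |(b ⟨k, Nat.lt_succ_self k⟩).2.1 - v.2.1|
        ≤ ENNReal.ofReal (|(a ⟨k, Nat.lt_succ_self k⟩).2.1 - v.2.1|
            + |(a ⟨k, Nat.lt_succ_self k⟩).2.1 - (b ⟨k, Nat.lt_succ_self k⟩).2.1|) := by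
          refine ENNReal.ofReal_le_ofReal ?_
          calc |(b ⟨k, Nat.lt_succ_self k⟩).2.1 - v.2.1|
              ≤ |(b ⟨k, Nat.lt_succ_self k⟩).2.1 - (a ⟨k, Nat.lt_succ_self k⟩).2.1|
                + |(a ⟨k, Nat.lt_succ_self k⟩).2.1 - v.2.1| := abs_sub_le _ _ _
            _ = |(a ⟨k, Nat.lt_succ_self k⟩).2.1 - v.2.1|
                + |(a ⟨k, Nat.lt_succ_self k⟩).2.1 - (b ⟨k, Nat.lt_succ_self k⟩).2.1| := by
                rw [abs_sub_comm]; ring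
      _ = ENNReal.ofReal |(a ⟨k, Nat.lt_succ_self k⟩).2.1 - v.2.1|
          + ENNReal.ofReal |(a ⟨k, Nat.lt_succ_self k⟩).2.1 - (b ⟨k, Nat.lt_succ_self k⟩).2.1| :=
          ENNReal.ofReal_add (abs_nonneg _) (abs_nonneg _)
      _ ≤ ∑ j ∈ Finset.range k, f j + f k := add_le_add hvb (le_of_eq hfn.symm)
  have hblt : ENNReal.ofReal |(b ⟨k, Nat.lt_succ_self k⟩).2.1 - v.2.1| < δ :=
    lt_of_le_of_lt (hfS ▸ hbb) hsum
  have hrel : r (b ⟨k, Nat.lt_succ_self k⟩) q := hkk ▸ Quotient.exact h2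
  rcases hr _ _ hrel with heq | ⟨hbV, hqV⟩
  · -- b_k = q
    have hv1q : v.1 = q.1 := hb1.trans (congrArg Sigma.fst heq)
    have hqlt : ENNReal.ofReal |q.2.1 - v.2.1| < δ := by rw [← heq]; exact hblt
    rcases hr v p hvp with heqvp | ⟨hvV, _⟩
    · -- v = p
      subst heqvp
      by_cases hpq : v = q
      · rw [hpq]
      · exfalso
        have hc : v.1 = q.1 ∧ v ≠ q := ⟨hv1q, hpq⟩
        have hpq' : δ ≤ ENNReal.ofReal |v.2.1 - q.2.1| := by
          refine le_trans hδle_pq ?_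
          rw [hδpq, if_pos hc]
        rw [abs_sub_comm] at hqlt
        exact absurd (lt_of_lt_of_le hqlt hpq') (lt_irrefl _)
    · rcases hvV with hv0 | hvl
      · by_cases hq0 : q.2.1 = 0
        · have hvq : v = q := sig_eq hv1q (hv0.trans hq0.symm)
          rw [hvq] at hvp
          exact Quotient.sound (Setoid.symm hvp)
        · exfalso
          have hb : δ ≤ ENNReal.ofReal q.2.1 :=
            le_trans hδle_q (le_trans inf_le_left (by rw [if_neg hq0]))
          rw [hv0, sub_zero, abs_of_nonneg q.2.2.1] at hqlt
          exact absurd (lt_of_lt_of_le hqlt hb) (lt_irrefl _)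
      · have hvlq : v.2.1 = ℓ q.1 := hvl.trans (congrArg ℓ hv1q)
        by_cases hqℓ : q.2.1 = ℓ q.1
        · have hvq : v = q := sig_eq hv1q (hvlq.trans hqℓ.symm)
          rw [hvq] at hvp
          exact Quotient.sound (Setoid.symm hvp)
        · exfalso
          have hb : δ ≤ ENNReal.ofReal (ℓ q.1 - q.2.1) :=
            le_trans hδle_q (le_trans inf_le_right (by rw [if_neg hqℓ]))
          rw [hvlq, abs_of_nonpos (sub_nonpos.mpr q.2.2.2), neg_sub] at hqlt
          exact absurd (lt_of_lt_of_le hqlt hb) (lt_irrefl _)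
  · have hbv : b ⟨k, Nat.lt_succ_self k⟩ = v := key _ _ hbV hb1 hblt hvp
    rw [hbv] at hrel
    exact Quotient.sound (Setoid.trans (Setoid.symm hvp) hrel)
end

section
/- If the edge lengths are uniformly bounded below, i.e. there exists c > 0 with c ≤ ℓ e for all e ∈ E, then the path pseudometric d_G is a (generalized) metric on G: for all ξ, θ ∈ G, d_G(ξ, θ) = 0 implies ξ = θ. -/
open scoped ENNReal

noncomputable def bump (δ t y : ℝ) : ℝ := max 0 (δ - |y - t|)

lemma bump_nonneg (δ t y : ℝ) : 0 ≤ bump δ t y := le_max_left _ _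

lemma bump_le (δ t y : ℝ) (hδ : 0 ≤ δ) : bump δ t y ≤ δ :=
  max_le hδ (by simp [abs_nonneg])

lemma bump_lip (δ t y z : ℝ) : |bump δ t y - bump δ t z| ≤ |y - z| := by
  unfold bump
  refine le_trans (abs_max_sub_max_le_max _ _ _ _) ?_
  simp only [sub_self, abs_zero]
  refine max_le (abs_nonneg _) ?_
  have h : (δ - |y - t|) - (δ - |z - t|) = |z - t| - |y - t| := by ring
  rw [h]
  calc |(|z - t| - |y - t|)| ≤ |z - t - (y - t)| := abs_abs_sub_abs_le_abs_sub _ _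
    _ = |y - z| := by rw [show z - t - (y - t) = z - y by ring, abs_sub_comm]

lemma bump_self (δ t : ℝ) (hδ : 0 ≤ δ) : bump δ t t = δ := by
  simp [bump, hδ]

lemma bump_eq_zero (δ t y : ℝ) (h : δ ≤ |y - t|) : bump δ t y = 0 := by
  simp only [bump, max_eq_left_iff]; linarith

lemma sig_eq_s4 {E : Type*} {ℓ : E → ℝ} {p q : Σ e : E, Set.Icc (0:ℝ) (ℓ e)}
    (h1 : q.1 = p.1) (h2 : q.2.1 = p.2.1) : q = p := by
  obtain ⟨e, x⟩ := p; obtain ⟨e', y⟩ := q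
  dsimp at h1; subst h1
  simp only [Sigma.mk.inj_iff, heq_eq_eq, true_and]
  exact Subtype.ext h2

lemma caseA {E : Type*} (ℓ : E → ℝ)
    (r : Setoid (Σ e : E, Set.Icc (0 : ℝ) (ℓ e)))
    (hr : ∀ p q, r p q → p = q ∨ (p ∈ Vset ℓ ∧ q ∈ Vset ℓ))
    (p q : Σ e : E, Set.Icc (0 : ℝ) (ℓ e))
    (hp : p ∉ Vset ℓ) (hpq : ¬ r p q) :
    ∃ f : (Σ e : E, Set.Icc (0 : ℝ) (ℓ e)) → ℝ,
      (∀ s t, r s t → f s = f t) ∧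
      (∀ s t, ENNReal.ofReal |f s - f t| ≤ dE ℓ s t) ∧ f p ≠ f q := by
  classical
  have hx := p.2.2
  simp only [Set.mem_Icc] at hx
  have hx0 : (0:ℝ) < p.2.1 := lt_of_le_of_ne hx.1 (by
    intro h; exact hp (Or.inl h.symm))
  have hxl : p.2.1 < ℓ p.1 := lt_of_le_of_ne hx.2 (by
    intro h; exact hp (Or.inr h))
  have hqp : q ≠ p := by
    rintro rfl; exact hpq (Setoid.refl _)
  set δ : ℝ := min (min p.2.1 (ℓ p.1 - p.2.1))
    (if q.1 = p.1 then |p.2.1 - q.2.1| else 1) with hδdef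
  have hδ : 0 < δ := by
    refine lt_min (lt_min hx0 (by linarith)) ?_
    split
    · next h =>
      rw [abs_pos, sub_ne_zero]
      intro heq; exact hqp (sig_eq_s4 h heq.symm)
    · exact one_pos
  set f : (Σ e : E, Set.Icc (0 : ℝ) (ℓ e)) → ℝ :=
    fun s => if h : s.1 = p.1 then bump δ p.2.1 s.2.1 else 0 with hf
  refine ⟨f, ?_, ?_, ?_⟩
  · -- constant on classes
    have hfV : ∀ s ∈ Vset ℓ, f s = 0 := by
      intro s hs
      by_cases h : s.1 = p.1
      · show (if h : s.1 = p.1 then bump δ p.2.1 s.2.1 else 0) = 0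
        rw [dif_pos h]
        apply bump_eq_zero
        rcases hs with h0 | hl
        · rw [h0]; rw [abs_sub_comm, abs_of_pos (by linarith : (0:ℝ) < p.2.1 - 0)]
          calc δ ≤ min p.2.1 (ℓ p.1 - p.2.1) := min_le_left _ _
            _ ≤ p.2.1 := min_le_left _ _
            _ = p.2.1 - 0 := by ring
        · have : s.2.1 = ℓ p.1 := by rw [hl, h]
          rw [this, abs_of_pos (by linarith : (0:ℝ) < ℓ p.1 - p.2.1)]
          calc δ ≤ min p.2.1 (ℓ p.1 - p.2.1) := min_le_left _ _
            _ ≤ ℓ p.1 - p.2.1 := min_le_right _ _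
      · show (if h : s.1 = p.1 then bump δ p.2.1 s.2.1 else 0) = 0
        rw [dif_neg h]
    intro s t hst
    rcases hr s t hst with rfl | ⟨hs, ht⟩
    · rfl
    · rw [hfV s hs, hfV t ht]
  · -- Lipschitz
    intro s t
    show ENNReal.ofReal |(if h : s.1 = p.1 then bump δ p.2.1 s.2.1 else 0)
      - (if h : t.1 = p.1 then bump δ p.2.1 t.2.1 else 0)| ≤ dE ℓ s t
    obtain ⟨e, y⟩ := s; obtain ⟨e', z⟩ := t
    unfold dE
    by_cases h : e = e'
    · subst h
      rw [if_pos rfl]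
      by_cases h2 : e = p.1
      · simp only [dif_pos h2]
        exact ENNReal.ofReal_le_ofReal (bump_lip _ _ _ _)
      · simp only [dif_neg h2, sub_self, abs_zero, ENNReal.ofReal_zero, zero_le]
    · rw [if_neg h]; exact le_top
  · -- f p ≠ f q
    have hfp : f p = δ := by
      show (if h : p.1 = p.1 then bump δ p.2.1 p.2.1 else 0) = δ
      rw [dif_pos rfl, bump_self _ _ hδ.le]
    have hfq : f q = 0 := by
      show (if h : q.1 = p.1 then bump δ p.2.1 q.2.1 else 0) = 0
      by_cases h : q.1 = p.1
      · rw [dif_pos h]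
        apply bump_eq_zero
        rw [abs_sub_comm]
        calc δ ≤ if q.1 = p.1 then |p.2.1 - q.2.1| else 1 := min_le_right _ _
          _ = |p.2.1 - q.2.1| := if_pos h
      · rw [dif_neg h]
    rw [hfp, hfq]
    exact hδ.ne'

lemma caseC {E : Type*} (ℓ : E → ℝ) (hℓ : ∀ e, 0 < ℓ e)
    (r : Setoid (Σ e : E, Set.Icc (0 : ℝ) (ℓ e)))
    (hr : ∀ p q, r p q → p = q ∨ (p ∈ Vset ℓ ∧ q ∈ Vset ℓ))
    (c : ℝ) (hc0 : 0 < c) (hcℓ : ∀ e, c ≤ ℓ e)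
    (p q : Σ e : E, Set.Icc (0 : ℝ) (ℓ e))
    (hp : p ∈ Vset ℓ) (hq : q ∈ Vset ℓ) (hpq : ¬ r p q) :
    ∃ f : (Σ e : E, Set.Icc (0 : ℝ) (ℓ e)) → ℝ,
      (∀ s t, r s t → f s = f t) ∧
      (∀ s t, ENNReal.ofReal |f s - f t| ≤ dE ℓ s t) ∧ f p ≠ f q := by
  classical
  set δ : ℝ := c / 2 with hδdef
  have hδ : 0 < δ := by positivity
  have hδℓ : ∀ e, δ ≤ ℓ e := fun e => le_trans (by linarith) (hcℓ e)
  set v0 : E → Σ e : E, Set.Icc (0 : ℝ) (ℓ e) :=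
    fun e => ⟨e, ⟨0, Set.mem_Icc.2 ⟨le_refl 0, (hℓ e).le⟩⟩⟩ with hv0
  set v1 : E → Σ e : E, Set.Icc (0 : ℝ) (ℓ e) :=
    fun e => ⟨e, ⟨ℓ e, Set.mem_Icc.2 ⟨(hℓ e).le, le_refl _⟩⟩⟩ with hv1
  set f : (Σ e : E, Set.Icc (0 : ℝ) (ℓ e)) → ℝ := fun s =>
    max (if r (v0 s.1) p then bump δ 0 s.2.1 else 0)
        (if r (v1 s.1) p then bump δ (ℓ s.1) s.2.1 else 0) with hf
  have hfV : ∀ v ∈ Vset ℓ, f v = if r v p then δ else 0 := by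
    intro v hv
    rcases hv with h0 | hl
    · have hveq : v = v0 v.1 := sig_eq_s4 rfl (by rw [h0])
      rw [hf]
      simp only
      rw [show bump δ 0 v.2.1 = δ by rw [h0]; simpa using bump_self δ 0 hδ.le]
      rw [show bump δ (ℓ v.1) v.2.1 = 0 by
        apply bump_eq_zero; rw [h0, abs_sub_comm, sub_zero,
          abs_of_pos (hℓ v.1)]; exact hδℓ _]
      rw [← hveq, ite_self]
      exact sup_eq_left.mpr (by split <;> simp [hδ.le])
    · have hveq : v = v1 v.1 := sig_eq_s4 rfl (by rw [hl])
      rw [hf]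
      simp only
      rw [show bump δ (ℓ v.1) v.2.1 = δ by rw [hl]; exact bump_self _ _ hδ.le]
      rw [show bump δ 0 v.2.1 = 0 by
        apply bump_eq_zero; rw [hl, sub_zero, abs_of_pos (hℓ v.1)]; exact hδℓ _]
      rw [← hveq, ite_self]
      exact sup_eq_right.mpr (by split <;> simp [hδ.le])
  refine ⟨f, ?_, ?_, ?_⟩
  · intro s t hst
    rcases hr s t hst with rfl | ⟨hs, ht⟩
    · rfl
    · rw [hfV s hs, hfV t ht]
      have : r s p ↔ r t p :=
        ⟨fun h => Setoid.trans (Setoid.symm hst) h, fun h => Setoid.trans hst h⟩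
      simp only [this]
  · intro s t
    obtain ⟨e, y⟩ := s; obtain ⟨e', z⟩ := t
    unfold dE
    by_cases h : e = e'
    · subst h
      rw [if_pos rfl]
      refine le_trans (ENNReal.ofReal_le_ofReal ?_) le_rfl
      rw [hf]
      simp only
      refine le_trans (abs_max_sub_max_le_max _ _ _ _) (max_le ?_ ?_)
      · split
        · exact bump_lip _ _ _ _
        · simp [abs_nonneg]
      · split
        · exact bump_lip _ _ _ _
        · simp [abs_nonneg]
    · rw [if_neg h]; exact le_top
  · have h1 : r p p := Setoid.refl p
    have h2 : ¬ r q p := fun h => hpq (Setoid.symm h)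
    rw [hfV p hp, hfV q hq, if_pos h1, if_neg h2]
    exact hδ.ne'

lemma tele {X : Type*} (r : Setoid X) (f : X → ℝ)
    (hconst : ∀ p q : X, r p q → f p = f q) :
    ∀ (k : ℕ) (a b : Fin (k + 1) → X)
      (_ : ∀ i : Fin k, r (b i.castSucc) (a i.succ)),
      |f (b (Fin.last k)) - f (a 0)| ≤ ∑ i, |f (b i) - f (a i)| := by
  intro k
  induction k with
  | zero => intro a b _; simp [Fin.last]
  | succ k ih =>
    intro a b hch
    have h1 := ih (fun i => a i.castSucc) (fun i => b i.castSucc)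
      (fun i => by simpa only [Fin.succ_castSucc] using hch i.castSucc)
    rw [Fin.sum_univ_castSucc (fun i => |f (b i) - f (a i)|)]
    have h2 : f (a (Fin.last k).succ) = f (b ((Fin.last k).castSucc)) :=
      (hconst _ _ (hch (Fin.last k))).symm
    calc |f (b (Fin.last (k+1))) - f (a 0)|
        ≤ |f (b (Fin.last (k+1))) - f (a (Fin.last (k+1)))|
          + |f (a (Fin.last (k+1))) - f (a 0)| := abs_sub_le _ _ _
      _ ≤ ∑ i : Fin (k+1), |f (b i.castSucc) - f (a i.castSucc)|
          + |f (b (Fin.last (k+1))) - f (a (Fin.last (k+1)))| := by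
          rw [show a (Fin.last (k+1)) = a (Fin.last k).succ by rw [Fin.succ_last]] at *
          rw [h2]
          have : a 0 = (fun i : Fin (k+1) => a i.castSucc) 0 := by simp
          rw [this] at *
          linarith [h1]
      _ = _ := by ring

lemma lip_le_dG {E : Type*} (ℓ : E → ℝ)
    (r : Setoid (Σ e : E, Set.Icc (0 : ℝ) (ℓ e)))
    (f : (Σ e : E, Set.Icc (0 : ℝ) (ℓ e)) → ℝ)
    (hconst : ∀ p q, r p q → f p = f q)
    (hlip : ∀ p q, ENNReal.ofReal |f p - f q| ≤ dE ℓ p q)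
    (p q : Σ e : E, Set.Icc (0 : ℝ) (ℓ e)) :
    ENNReal.ofReal |f q - f p| ≤ dG ℓ r (Quotient.mk r p) (Quotient.mk r q) := by
  refine le_iInf fun k => le_iInf fun a => le_iInf fun b => le_iInf fun ha =>
    le_iInf fun hb => le_iInf fun hch => ?_
  have hfa : f (a 0) = f p := hconst _ _ (Quotient.exact ha)
  have hfb : f (b (Fin.last k)) = f q := hconst _ _ (Quotient.exact hb)
  calc ENNReal.ofReal |f q - f p|
      = ENNReal.ofReal |f (b (Fin.last k)) - f (a 0)| := by rw [hfa, hfb]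
    _ ≤ ENNReal.ofReal (∑ i, |f (b i) - f (a i)|) :=
        ENNReal.ofReal_le_ofReal (tele r f hconst k a b hch)
    _ = ∑ i, ENNReal.ofReal |f (b i) - f (a i)| :=
        ENNReal.ofReal_sum_of_nonneg (fun i _ => abs_nonneg _)
    _ ≤ ∑ i, dE ℓ (a i) (b i) := Finset.sum_le_sum fun i _ => by
        rw [abs_sub_comm]; exact hlip _ _


/-- If the edge lengths are uniformly bounded below, the path pseudometric is a
(generalized) metric. -/
theorem stmt4 {E : Type*} [Countable E] (ℓ : E → ℝ) (hℓ : ∀ e, 0 < ℓ e)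
    (r : Setoid (Σ e : E, Set.Icc (0 : ℝ) (ℓ e)))
    (hr : ∀ p q, r p q → p = q ∨ (p ∈ Vset ℓ ∧ q ∈ Vset ℓ))
    (hc : ∃ c > (0 : ℝ), ∀ e, c ≤ ℓ e) :
    ∀ ξ θ : Quotient r, dG ℓ r ξ θ = 0 → ξ = θ := by
  obtain ⟨c, hc0, hcℓ⟩ := hc
  intro ξ θ h0
  obtain ⟨p, rfl⟩ := Quotient.exists_rep ξ
  obtain ⟨q, rfl⟩ := Quotient.exists_rep θ
  by_contra hne
  have hpq : ¬ r p q := fun h => hne (Quotient.sound h)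
  have key : ∀ f : (Σ e : E, Set.Icc (0 : ℝ) (ℓ e)) → ℝ,
      (∀ s t, r s t → f s = f t) →
      (∀ s t, ENNReal.ofReal |f s - f t| ≤ dE ℓ s t) → f p = f q := by
    intro f hconst hlip
    have h1 := lip_le_dG ℓ r f hconst hlip p q
    rw [h0] at h1
    have h2 : |f q - f p| ≤ 0 := by
      by_contra h3
      push_neg at h3
      exact (ENNReal.ofReal_pos.mpr h3).ne' (le_antisymm h1 bot_le)
    have := abs_nonneg (f q - f p)
    have : f q - f p = 0 := abs_eq_zero.mp (le_antisymm h2 (abs_nonneg _))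
    linarith [this]
  by_cases hp : p ∈ Vset ℓ
  · by_cases hq : q ∈ Vset ℓ
    · obtain ⟨f, hconst, hlip, hne'⟩ := caseC ℓ hℓ r hr c hc0 hcℓ p q hp hq hpq
      exact hne' (key f hconst hlip)
    · obtain ⟨f, hconst, hlip, hne'⟩ :=
        caseA ℓ r hr q p hq (fun h => hpq (Setoid.symm h))
      exact hne' (key f hconst hlip).symm
  · obtain ⟨f, hconst, hlip, hne'⟩ := caseA ℓ r hr p q hp hpq
    exact hne' (key f hconst hlip)
end

section
/- If there exists c > 0 with c ≤ ℓ e for all e ∈ E, then the metric graph G is complete with respect to d_G: every sequence (ξ_n) in G that is Cauchy with respect to d_G (i.e. for every ε > 0 there is N such that d_G(ξ_m, ξ_n) < ε for all m, n ≥ N) converges to some ξ ∈ G, in the sense that d_G(ξ_n, ξ) → 0. -/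
open scoped ENNReal

section AuxLemmas

variable {E : Type*} {ℓ : E → ℝ} {r : Setoid (Σ e : E, Set.Icc (0 : ℝ) (ℓ e))}

lemma dE_self' (p : Σ e : E, Set.Icc (0 : ℝ) (ℓ e)) : dE ℓ p p = 0 := by
  simp [dE]

lemma dE_comm' (p q : Σ e : E, Set.Icc (0 : ℝ) (ℓ e)) : dE ℓ p q = dE ℓ q p := by
  unfold dE
  by_cases h : p.1 = q.1
  · rw [if_pos h, if_pos h.symm, abs_sub_comm]
  · rw [if_neg h, if_neg (fun h' => h h'.symm)]

lemma dE_eq' {p q : Σ e : E, Set.Icc (0 : ℝ) (ℓ e)} (h : p.1 = q.1) :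
    dE ℓ p q = ENNReal.ofReal |p.2.1 - q.2.1| := by
  unfold dE; rw [if_pos h]

lemma edge_eq_of_dE_lt_top {p q : Σ e : E, Set.Icc (0 : ℝ) (ℓ e)}
    (h : dE ℓ p q < ⊤) : p.1 = q.1 := by
  by_contra hne
  unfold dE at h
  rw [if_neg hne] at h
  exact lt_irrefl _ h

lemma dE_triangle' {p q s : Σ e : E, Set.Icc (0 : ℝ) (ℓ e)} (h : p.1 = q.1) :
    dE ℓ p s ≤ dE ℓ p q + dE ℓ q s := by
  by_cases h2 : q.1 = s.1
  · rw [dE_eq' h, dE_eq' h2, dE_eq' (h.trans h2),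
      ← ENNReal.ofReal_add (abs_nonneg _) (abs_nonneg _)]
    exact ENNReal.ofReal_le_ofReal (abs_sub_le _ _ _)
  · have : dE ℓ q s = ⊤ := by unfold dE; rw [if_neg h2]
    simp [this]

lemma sigma_ext' {p q : Σ e : E, Set.Icc (0 : ℝ) (ℓ e)}
    (h1 : p.1 = q.1) (h2 : p.2.1 = q.2.1) : p = q := by
  obtain ⟨e, x⟩ := p
  obtain ⟨f, y⟩ := q
  cases h1
  cases Subtype.ext h2
  rfl

lemma Vset_eq_of_dE_lt {c : ℝ} (hc0 : 0 < c) (hcle : ∀ e, c ≤ ℓ e)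
    {p q : Σ e : E, Set.Icc (0 : ℝ) (ℓ e)}
    (hp : p ∈ Vset ℓ) (hq : q ∈ Vset ℓ) (hedge : p.1 = q.1)
    (h : dE ℓ p q < ENNReal.ofReal c) : p = q := by
  have hlc : ENNReal.ofReal c ≤ ENNReal.ofReal |p.2.1 - q.2.1| → False := fun hle => by
    rw [dE_eq' hedge] at h
    exact (lt_irrefl _ (lt_of_lt_of_le h hle))
  have hc' : c ≤ ℓ p.1 := hcle p.1
  rcases hp with hp | hp <;> rcases hq with hq | hq
  · exact sigma_ext' hedge (hp.trans hq.symm)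
  · exfalso
    apply hlc
    apply ENNReal.ofReal_le_ofReal
    rw [hp, hq, ← hedge]
    rw [abs_sub_comm, sub_zero, abs_of_nonneg (by linarith)]
    exact hc'
  · exfalso
    apply hlc
    apply ENNReal.ofReal_le_ofReal
    rw [hp, hq]
    rw [sub_zero, abs_of_nonneg (by linarith)]
    exact hc'
  · exact sigma_ext' hedge (by rw [hp, hq, hedge])

lemma mem_Vset_of_rel (hr : ∀ p q, r p q → p = q ∨ (p ∈ Vset ℓ ∧ q ∈ Vset ℓ))
    {p v : Σ e : E, Set.Icc (0 : ℝ) (ℓ e)} (h : r p v) (hv : v ∈ Vset ℓ) :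
    p ∈ Vset ℓ := by
  rcases hr _ _ h with he | ⟨h1, _⟩
  · exact he ▸ hv
  · exact h1

lemma dG_le_chain {ξ θ : Quotient r} {k : ℕ}
    {a b : Fin (k + 1) → Σ e : E, Set.Icc (0 : ℝ) (ℓ e)}
    (h1 : Quotient.mk r (a 0) = ξ) (h2 : Quotient.mk r (b (Fin.last k)) = θ)
    (h3 : ∀ i : Fin k, r (b i.castSucc) (a i.succ)) :
    dG ℓ r ξ θ ≤ ∑ i, dE ℓ (a i) (b i) :=
  iInf_le_of_le k (iInf_le_of_le a (iInf_le_of_le b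
    (iInf_le_of_le h1 (iInf_le_of_le h2 (iInf_le _ h3)))))

lemma dG_le_dE {ξ θ : Quotient r} {p q : Σ e : E, Set.Icc (0 : ℝ) (ℓ e)}
    (hp : Quotient.mk r p = ξ) (hq : Quotient.mk r q = θ) :
    dG ℓ r ξ θ ≤ dE ℓ p q := by
  have := dG_le_chain (k := 0) (a := fun _ => p) (b := fun _ => q) hp hq
    (fun i => i.elim0)
  simpa using this

lemma dG_self (ξ : Quotient r) : dG ℓ r ξ ξ = 0 := by
  obtain ⟨p, hp⟩ := ξ.exists_rep
  exact le_antisymm (by simpa [dE_self'] using dG_le_dE (r := r) hp hp) zero_le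

lemma dG_lt_iff {ξ θ : Quotient r} {t : ℝ≥0∞} :
    dG ℓ r ξ θ < t ↔ ∃ (k : ℕ) (a b : Fin (k + 1) → Σ e : E, Set.Icc (0 : ℝ) (ℓ e)),
      Quotient.mk r (a 0) = ξ ∧ Quotient.mk r (b (Fin.last k)) = θ ∧
      (∀ i : Fin k, r (b i.castSucc) (a i.succ)) ∧ ∑ i, dE ℓ (a i) (b i) < t := by
  simp only [dG, iInf_lt_iff, exists_prop]

lemma dG_symm (ξ θ : Quotient r) : dG ℓ r ξ θ = dG ℓ r θ ξ := by
  have key : ∀ ξ θ : Quotient r, dG ℓ r θ ξ ≤ dG ℓ r ξ θ := by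
    intro ξ θ
    refine le_iInf fun k => le_iInf fun a => le_iInf fun b => le_iInf fun h1 =>
      le_iInf fun h2 => le_iInf fun h3 => ?_
    have := dG_le_chain (r := r) (ξ := θ) (θ := ξ) (k := k)
      (a := fun i => b i.rev) (b := fun i => a i.rev)
      (by show Quotient.mk r (b (Fin.rev 0)) = θ; rw [Fin.rev_zero]; exact h2)
      (by show Quotient.mk r (a (Fin.last k).rev) = ξ; rw [Fin.rev_last]; exact h1)
      (fun i => by
        show r (a i.castSucc.rev) (b i.succ.rev)
        rw [Fin.rev_castSucc, Fin.rev_succ]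
        exact Setoid.symm (h3 i.rev))
    refine this.trans (le_of_eq ?_)
    refine Fintype.sum_bijective Fin.rev Fin.rev_bijective _ _ (fun i => ?_)
    show dE ℓ (b i.rev) (a i.rev) = dE ℓ (a i.rev) (b i.rev)
    exact dE_comm' _ _
  exact le_antisymm (key θ ξ) (key ξ θ)

set_option linter.unusedTactic false in
set_option linter.unreachableTactic false in
lemma dG_concat {ξ θ ζ : Quotient r} {kA kB : ℕ}
    {aA bA : Fin (kA + 1) → Σ e : E, Set.Icc (0 : ℝ) (ℓ e)}
    {aB bB : Fin (kB + 1) → Σ e : E, Set.Icc (0 : ℝ) (ℓ e)}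
    (h1A : Quotient.mk r (aA 0) = ξ) (h2A : Quotient.mk r (bA (Fin.last kA)) = θ)
    (h3A : ∀ i : Fin kA, r (bA i.castSucc) (aA i.succ))
    (h1B : Quotient.mk r (aB 0) = θ) (h2B : Quotient.mk r (bB (Fin.last kB)) = ζ)
    (h3B : ∀ i : Fin kB, r (bB i.castSucc) (aB i.succ)) :
    dG ℓ r ξ ζ ≤ ∑ i, dE ℓ (aA i) (bA i) + ∑ i, dE ℓ (aB i) (bB i) := by
  classical
  set k := kA + kB + 1 with hk
  have hlt : ∀ i : Fin (k + 1), ¬ (i : ℕ) < kA + 1 → (i : ℕ) - (kA + 1) < kB + 1 :=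
    fun i h => by have := i.isLt; omega
  set a : Fin (k + 1) → Σ e : E, Set.Icc (0 : ℝ) (ℓ e) :=
    fun i => if h : (i : ℕ) < kA + 1 then aA ⟨i, h⟩ else aB ⟨(i : ℕ) - (kA + 1), hlt i h⟩
    with ha
  set b : Fin (k + 1) → Σ e : E, Set.Icc (0 : ℝ) (ℓ e) :=
    fun i => if h : (i : ℕ) < kA + 1 then bA ⟨i, h⟩ else bB ⟨(i : ℕ) - (kA + 1), hlt i h⟩
    with hb
  have haP : ∀ (i : Fin (k + 1)) (h : (i : ℕ) < kA + 1), a i = aA ⟨i, h⟩ :=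
    fun i h => dif_pos h
  have haN : ∀ (i : Fin (k + 1)) (h : ¬ (i : ℕ) < kA + 1),
      a i = aB ⟨(i : ℕ) - (kA + 1), hlt i h⟩ := fun i h => dif_neg h
  have hbP : ∀ (i : Fin (k + 1)) (h : (i : ℕ) < kA + 1), b i = bA ⟨i, h⟩ :=
    fun i h => dif_pos h
  have hbN : ∀ (i : Fin (k + 1)) (h : ¬ (i : ℕ) < kA + 1),
      b i = bB ⟨(i : ℕ) - (kA + 1), hlt i h⟩ := fun i h => dif_neg h
  have ha0 : a 0 = aA 0 :=
    (haP 0 (by simp)).trans (congrArg aA (by apply Fin.ext; simp))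
  have hbl : b (Fin.last k) = bB (Fin.last kB) :=
    (hbN (Fin.last k) (by simp only [Fin.val_last, hk]; omega)).trans
      (congrArg bB (by apply Fin.ext; simp only [Fin.val_last, hk]; omega))
  have hlink : ∀ i : Fin k, r (b i.castSucc) (a i.succ) := by
    intro i
    have hik := i.isLt
    rcases lt_trichotomy (i : ℕ) kA with h | h | h
    · rw [hbP i.castSucc (by simp only [Fin.coe_castSucc]; omega),
        haP i.succ (by simp only [Fin.val_succ]; omega)]
      convert h3A ⟨i, h⟩ using 2 <;>
        (apply Fin.ext; simp [Fin.coe_castSucc, Fin.val_succ])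
    · rw [hbP i.castSucc (by simp only [Fin.coe_castSucc]; omega),
        haN i.succ (by simp only [Fin.val_succ]; omega)]
      convert Quotient.eq.mp (h2A.trans h1B.symm) using 2 <;>
        (apply Fin.ext; simp only [Fin.coe_castSucc, Fin.val_succ, Fin.val_last,
          Fin.val_zero]; omega)
    · rw [hbN i.castSucc (by simp only [Fin.coe_castSucc]; omega),
        haN i.succ (by simp only [Fin.val_succ]; omega)]
      convert h3B ⟨(i : ℕ) - (kA + 1), by omega⟩ using 2 <;>
        (apply Fin.ext; simp only [Fin.coe_castSucc, Fin.val_succ] <;> omega)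
  refine (dG_le_chain (by rw [ha0]; exact h1A) (by rw [hbl]; exact h2B) hlink).trans
    (le_of_eq ?_)
  let f : ℕ → ℝ≥0∞ := fun n =>
    if h : n < kA + 1 then dE ℓ (aA ⟨n, h⟩) (bA ⟨n, h⟩)
    else if h2 : n - (kA + 1) < kB + 1 then dE ℓ (aB ⟨n - (kA + 1), h2⟩) (bB ⟨n - (kA + 1), h2⟩)
    else 0
  have step1 : ∑ i : Fin (k + 1), dE ℓ (a i) (b i) = ∑ i : Fin (k + 1), f (i : ℕ) :=
    Finset.sum_congr rfl fun i _ => by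
      by_cases h : (i : ℕ) < kA + 1
      · rw [haP i h, hbP i h]; simp only [f]; rw [dif_pos h]
      · rw [haN i h, hbN i h]; simp only [f]; rw [dif_neg h, dif_pos (hlt i h)]
  rw [step1, Fin.sum_univ_eq_sum_range f (k + 1)]
  have hkk : k + 1 = (kA + 1) + (kB + 1) := by omega
  rw [hkk, Finset.range_eq_Ico,
    ← Finset.sum_Ico_consecutive f (Nat.zero_le (kA + 1)) (by omega : kA + 1 ≤ kA + 1 + (kB + 1))]
  congr 1
  · rw [← Finset.range_eq_Ico, ← Fin.sum_univ_eq_sum_range f (kA + 1)]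
    refine Finset.sum_congr rfl fun i _ => ?_
    simp only [f]
    rw [dif_pos i.isLt]
    try (congr <;> (apply Fin.ext; simp))
  · rw [Finset.sum_Ico_eq_sum_range,
      (by omega : kA + 1 + (kB + 1) - (kA + 1) = kB + 1),
      ← Fin.sum_univ_eq_sum_range (fun n => f (kA + 1 + n)) (kB + 1)]
    refine Finset.sum_congr rfl fun i _ => ?_
    have hi := i.isLt
    simp only [f]
    rw [dif_neg (by omega), dif_pos (by omega : kA + 1 + (i : ℕ) - (kA + 1) < kB + 1)]
    exact congrArg₂ (dE ℓ)
      (congrArg aB (Fin.ext (by show kA + 1 + (i : ℕ) - (kA + 1) = (i : ℕ); omega)))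
      (congrArg bB (Fin.ext (by show kA + 1 + (i : ℕ) - (kA + 1) = (i : ℕ); omega)))

lemma dG_triangle (ξ θ ζ : Quotient r) :
    dG ℓ r ξ ζ ≤ dG ℓ r ξ θ + dG ℓ r θ ζ := by
  by_cases h1 : dG ℓ r ξ θ = ⊤
  · simp [h1]
  by_cases h2 : dG ℓ r θ ζ = ⊤
  · simp [h2]
  refine ENNReal.le_of_forall_pos_le_add fun ε hε _ => ?_
  have hε2 : ((ε : ℝ≥0∞) / 2) ≠ 0 := by
    have hpos : (0 : ℝ≥0∞) < ε := ENNReal.coe_pos.mpr hε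
    exact (ENNReal.half_pos hpos.ne').ne'
  have hA : dG ℓ r ξ θ < dG ℓ r ξ θ + (ε : ℝ≥0∞) / 2 := ENNReal.lt_add_right h1 hε2
  have hB : dG ℓ r θ ζ < dG ℓ r θ ζ + (ε : ℝ≥0∞) / 2 := ENNReal.lt_add_right h2 hε2
  obtain ⟨kA, aA, bA, h1A, h2A, h3A, hsA⟩ := dG_lt_iff.mp hA
  obtain ⟨kB, aB, bB, h1B, h2B, h3B, hsB⟩ := dG_lt_iff.mp hB
  calc dG ℓ r ξ ζ ≤ _ := dG_concat h1A h2A h3A h1B h2B h3B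
  _ ≤ (dG ℓ r ξ θ + (ε : ℝ≥0∞) / 2) + (dG ℓ r θ ζ + (ε : ℝ≥0∞) / 2) :=
    add_le_add hsA.le hsB.le
  _ = dG ℓ r ξ θ + dG ℓ r θ ζ + ε := by
    rw [add_add_add_comm]
    congr 1
    exact ENNReal.add_halves _

lemma chain_structure {c : ℝ} (hc0 : 0 < c) (hcle : ∀ e, c ≤ ℓ e)
    (hr : ∀ p q, r p q → p = q ∨ (p ∈ Vset ℓ ∧ q ∈ Vset ℓ)) :
    ∀ (k : ℕ) (a b : Fin (k + 1) → Σ e : E, Set.Icc (0 : ℝ) (ℓ e)),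
      (∀ i : Fin k, r (b i.castSucc) (a i.succ)) →
      (∑ i, dE ℓ (a i) (b i)) < ENNReal.ofReal c →
      dE ℓ (a 0) (b (Fin.last k)) ≤ ∑ i, dE ℓ (a i) (b i) ∨
      ∃ v w, v ∈ Vset ℓ ∧ w ∈ Vset ℓ ∧ r v w ∧
        dE ℓ (a 0) v + dE ℓ w (b (Fin.last k)) ≤ ∑ i, dE ℓ (a i) (b i) := by
  intro k
  induction k with
  | zero =>
    intro a b _ _
    left
    simp
  | succ k ih =>
    intro a b hlink hsum
    set A : Fin (k + 1) → Σ e : E, Set.Icc (0 : ℝ) (ℓ e) := fun i => a i.castSucc with hA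
    set B : Fin (k + 1) → Σ e : E, Set.Icc (0 : ℝ) (ℓ e) := fun i => b i.castSucc with hB
    have sum_split : ∑ i, dE ℓ (a i) (b i) =
        (∑ i, dE ℓ (A i) (B i)) + dE ℓ (a (Fin.last (k + 1))) (b (Fin.last (k + 1))) :=
      Fin.sum_univ_castSucc _
    have hlink' : ∀ i : Fin k, r (B i.castSucc) (A i.succ) := fun i => by
      show r (b i.castSucc.castSucc) (a i.succ.castSucc)
      rw [← Fin.succ_castSucc]
      exact hlink i.castSucc
    rw [sum_split] at hsum
    have hsum1 : (∑ i, dE ℓ (A i) (B i)) < ENNReal.ofReal c :=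
      lt_of_le_of_lt le_self_add hsum
    have hA0 : A 0 = a 0 := congrArg a (Fin.castSucc_zero)
    have hlinkl : r (B (Fin.last k)) (a (Fin.last (k + 1))) := by
      have := hlink (Fin.last k)
      rwa [Fin.succ_last] at this
    set t := dE ℓ (a (Fin.last (k + 1))) (b (Fin.last (k + 1))) with ht
    rw [sum_split]
    rcases ih A B hlink' hsum1 with hL | ⟨v, w, hv, hw, hrel, hb2⟩
    · -- prefix collapses to one edge segment from a 0 to B (last k)
      have hfin : (A 0).1 = (B (Fin.last k)).1 :=
        edge_eq_of_dE_lt_top (lt_of_le_of_lt hL (hsum1.trans_le le_top))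
      rcases hr _ _ hlinkl with heq | ⟨hBV, haV⟩
      · left
        have htr : dE ℓ (a 0) (b (Fin.last (k + 1))) ≤
            dE ℓ (a 0) (B (Fin.last k)) + dE ℓ (B (Fin.last k)) (b (Fin.last (k + 1))) :=
          dE_triangle' (hA0 ▸ hfin)
        have : dE ℓ (B (Fin.last k)) (b (Fin.last (k + 1))) = t := by rw [heq]
        rw [this] at htr
        exact htr.trans (add_le_add (hA0 ▸ hL) le_rfl)
      · right
        exact ⟨B (Fin.last k), a (Fin.last (k + 1)), hBV, haV, hlinkl,
          add_le_add (hA0 ▸ hL) le_rfl⟩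
    · have hwB : dE ℓ w (B (Fin.last k)) ≤ ∑ i, dE ℓ (A i) (B i) :=
        le_add_self.trans hb2
      have hav : dE ℓ (A 0) v ≤ ∑ i, dE ℓ (A i) (B i) := le_self_add.trans hb2
      rcases hr _ _ hlinkl with heq | ⟨hBV, haV⟩
      · right
        have hfin : w.1 = (B (Fin.last k)).1 :=
          edge_eq_of_dE_lt_top (lt_of_le_of_lt hwB (hsum1.trans_le le_top))
        refine ⟨v, w, hv, hw, hrel, ?_⟩
        have htr : dE ℓ w (b (Fin.last (k + 1))) ≤
            dE ℓ w (B (Fin.last k)) + dE ℓ (B (Fin.last k)) (b (Fin.last (k + 1))) :=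
          dE_triangle' hfin
        have he2 : dE ℓ (B (Fin.last k)) (b (Fin.last (k + 1))) = t := by rw [heq]
        rw [he2] at htr
        calc dE ℓ (a 0) v + dE ℓ w (b (Fin.last (k + 1)))
            ≤ dE ℓ (a 0) v + (dE ℓ w (B (Fin.last k)) + t) := add_le_add le_rfl htr
          _ = (dE ℓ (a 0) v + dE ℓ w (B (Fin.last k))) + t := (add_assoc _ _ _).symm
          _ ≤ (∑ i, dE ℓ (A i) (B i)) + t := add_le_add (hA0 ▸ hb2) le_rfl
      · have hfin : w.1 = (B (Fin.last k)).1 :=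
          edge_eq_of_dE_lt_top (lt_of_le_of_lt hwB (hsum1.trans_le le_top))
        have hwB' : w = B (Fin.last k) :=
          Vset_eq_of_dE_lt hc0 hcle hw hBV hfin (lt_of_le_of_lt hwB hsum1)
        right
        refine ⟨v, a (Fin.last (k + 1)), hv, haV,
          Setoid.trans hrel (hwB' ▸ hlinkl), ?_⟩
        have : dE ℓ (a (Fin.last (k + 1))) (b (Fin.last (k + 1))) = t := rfl
        exact add_le_add (hA0 ▸ hav) le_rfl

lemma vertex_sep {c : ℝ} (hc0 : 0 < c) (hcle : ∀ e, c ≤ ℓ e)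
    (hr : ∀ p q, r p q → p = q ∨ (p ∈ Vset ℓ ∧ q ∈ Vset ℓ))
    {v w : Σ e : E, Set.Icc (0 : ℝ) (ℓ e)} (hv : v ∈ Vset ℓ) (hw : w ∈ Vset ℓ)
    (h : dG ℓ r (Quotient.mk r v) (Quotient.mk r w) < ENNReal.ofReal c) :
    Quotient.mk r v = Quotient.mk r w := by
  obtain ⟨k, a, b, h1, h2, h3, hs⟩ := dG_lt_iff.mp h
  have ha0V : a 0 ∈ Vset ℓ := mem_Vset_of_rel hr (Quotient.eq.mp h1) hv
  have hbV : b (Fin.last k) ∈ Vset ℓ := mem_Vset_of_rel hr (Quotient.eq.mp h2) hw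
  rcases chain_structure hc0 hcle hr k a b h3 hs with hL | ⟨v', w', hv', hw', hrel, hb2⟩
  · have hfin : (a 0).1 = (b (Fin.last k)).1 :=
      edge_eq_of_dE_lt_top (lt_of_le_of_lt hL (hs.trans_le le_top))
    have heq := Vset_eq_of_dE_lt hc0 hcle ha0V hbV hfin (lt_of_le_of_lt hL hs)
    rw [← h1, ← h2, heq]
  · have h1' : dE ℓ (a 0) v' ≤ ∑ i, dE ℓ (a i) (b i) := le_self_add.trans hb2
    have h2' : dE ℓ w' (b (Fin.last k)) ≤ ∑ i, dE ℓ (a i) (b i) := le_add_self.trans hb2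
    have e1 : a 0 = v' := Vset_eq_of_dE_lt hc0 hcle ha0V hv'
      (edge_eq_of_dE_lt_top (lt_of_le_of_lt h1' (hs.trans_le le_top)))
      (lt_of_le_of_lt h1' hs)
    have e2 : w' = b (Fin.last k) := Vset_eq_of_dE_lt hc0 hcle hw' hbV
      (edge_eq_of_dE_lt_top (lt_of_le_of_lt h2' (hs.trans_le le_top)))
      (lt_of_le_of_lt h2' hs)
    rw [← h1, ← h2, e1, ← e2]
    exact Quotient.eq.mpr hrel

end AuxLemmas

/-- If the edge lengths are uniformly bounded below, the metric graph is complete with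
respect to the path pseudometric: every Cauchy sequence converges. -/
theorem stmt8 {E : Type*} [Countable E] (ℓ : E → ℝ) (hℓ : ∀ e, 0 < ℓ e)
    (r : Setoid (Σ e : E, Set.Icc (0 : ℝ) (ℓ e)))
    (hr : ∀ p q, r p q → p = q ∨ (p ∈ Vset ℓ ∧ q ∈ Vset ℓ))
    (hc : ∃ c > (0 : ℝ), ∀ e, c ≤ ℓ e) :
    ∀ ξ : ℕ → Quotient r,
      (∀ ε : ℝ≥0∞, 0 < ε → ∃ N : ℕ, ∀ m n : ℕ, N ≤ m → N ≤ n →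
        dG ℓ r (ξ m) (ξ n) < ε) →
      ∃ ξ' : Quotient r,
        Filter.Tendsto (fun n => dG ℓ r (ξ n) ξ') Filter.atTop (nhds 0) := by
  obtain ⟨c, hc0, hcle⟩ := hc
  intro ξ hcau
  by_cases hB : ∃ ε : ℝ≥0∞, 0 < ε ∧ ε < ENNReal.ofReal c ∧
      ∃ N : ℕ, ∀ n, N ≤ n → ∀ w ∈ Vset ℓ, ε ≤ dG ℓ r (ξ n) (Quotient.mk r w)
  · -- Case B : the sequence stays uniformly away from the vertices
    obtain ⟨ε, hε0, hεC, N0, hN0⟩ := hB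
    choose ρ hρ using fun n => (ξ n).exists_rep
    have hρV : ∀ n, N0 ≤ n → ρ n ∉ Vset ℓ := by
      intro n hn hV
      have h0 : dG ℓ r (ξ n) (Quotient.mk r (ρ n)) = 0 := by
        rw [hρ n]; exact dG_self _
      have := hN0 n hn (ρ n) hV
      rw [h0] at this
      exact (not_le.mpr hε0) this
    have hUniq : ∀ n, N0 ≤ n → ∀ p, Quotient.mk r p = ξ n → p = ρ n := by
      intro n hn p hp
      have hrel : r p (ρ n) := Quotient.eq.mp (hp.trans (hρ n).symm)
      rcases hr _ _ hrel with he | ⟨_, hV⟩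
      · exact he
      · exact absurd hV (hρV n hn)
    have key : ∀ m n, N0 ≤ m → N0 ≤ n → dG ℓ r (ξ m) (ξ n) < ε →
        (ρ m).1 = (ρ n).1 ∧ dE ℓ (ρ m) (ρ n) ≤ dG ℓ r (ξ m) (ξ n) := by
      intro m n hm hn hlt
      have H : ∀ t, dG ℓ r (ξ m) (ξ n) < t → t ≤ ε → dE ℓ (ρ m) (ρ n) < t := by
        intro t h1t h2t
        obtain ⟨k, a, b, h1, h2, h3, hs⟩ := dG_lt_iff.mp h1t
        have hsc : (∑ i, dE ℓ (a i) (b i)) < ENNReal.ofReal c :=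
          lt_of_lt_of_le hs (h2t.trans hεC.le)
        rcases chain_structure hc0 hcle hr k a b h3 hsc with hL | ⟨v, w, hv, _, _, hb2⟩
        · have e1 : a 0 = ρ m := hUniq m hm _ h1
          have e2 : b (Fin.last k) = ρ n := hUniq n hn _ h2
          rw [← e1, ← e2]
          exact lt_of_le_of_lt hL hs
        · exfalso
          have hdv : dG ℓ r (ξ m) (Quotient.mk r v) ≤ dE ℓ (a 0) v :=
            dG_le_dE h1 rfl
          have : dG ℓ r (ξ m) (Quotient.mk r v) < ε :=
            lt_of_le_of_lt (hdv.trans (le_self_add.trans hb2)) (hs.trans_le h2t)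
          exact (not_le.mpr this) (hN0 m hm v hv)
      have hdE : dE ℓ (ρ m) (ρ n) ≤ dG ℓ r (ξ m) (ξ n) := by
        by_contra hcon
        push_neg at hcon
        have := H (min (dE ℓ (ρ m) (ρ n)) ε) (lt_min hcon hlt) (min_le_right _ _)
        exact absurd (this.trans_le (min_le_left _ _)) (lt_irrefl _)
      refine ⟨edge_eq_of_dE_lt_top ?_, hdE⟩
      exact lt_of_le_of_lt hdE (hlt.trans (hεC.trans ENNReal.ofReal_lt_top))
    obtain ⟨N1, hN1⟩ := hcau ε hε0
    set n0 := max N0 N1 with hn0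
    have hn0N0 : N0 ≤ n0 := le_max_left _ _
    have hn0N1 : N1 ≤ n0 := le_max_right _ _
    have hedge : ∀ n, n0 ≤ n → (ρ n).1 = (ρ n0).1 := by
      intro n hn
      exact ((key n0 n hn0N0 (hn0N0.trans hn) (hN1 n0 n hn0N1 (hn0N1.trans hn))).1).symm
    set u : ℕ → ℝ := fun j => (ρ (max j n0)).2.1 with hu
    have hcs : CauchySeq u := by
      rw [Metric.cauchySeq_iff]
      intro ε' hε'
      have hδ0 : 0 < min (ENNReal.ofReal ε') ε := lt_min (ENNReal.ofReal_pos.mpr hε') hε0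
      obtain ⟨N2, hN2⟩ := hcau _ hδ0
      refine ⟨max N2 n0, fun m hm n hn => ?_⟩
      have hmn0 : n0 ≤ m := le_trans (le_max_right _ _) hm
      have hnn0 : n0 ≤ n := le_trans (le_max_right _ _) hn
      have hmN2 : N2 ≤ m := le_trans (le_max_left _ _) hm
      have hnN2 : N2 ≤ n := le_trans (le_max_left _ _) hn
      have hlt := hN2 m n hmN2 hnN2
      have hk := key m n (hn0N0.trans hmn0) (hn0N0.trans hnn0)
        (lt_of_lt_of_le hlt (min_le_right _ _))
      have hdE : dE ℓ (ρ m) (ρ n) < ENNReal.ofReal ε' :=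
        lt_of_le_of_lt hk.2 (lt_of_lt_of_le hlt (min_le_left _ _))
      rw [dE_eq' hk.1] at hdE
      have habs : |(ρ m).2.1 - (ρ n).2.1| < ε' :=
        (ENNReal.ofReal_lt_ofReal_iff hε').mp hdE
      show dist (ρ (max m n0)).2.1 (ρ (max n n0)).2.1 < ε'
      rw [max_eq_left hmn0, max_eq_left hnn0, Real.dist_eq]
      exact habs
    obtain ⟨y, hy⟩ := cauchySeq_tendsto_of_complete hcs
    have hmem : ∀ j, u j ∈ Set.Icc (0 : ℝ) (ℓ (ρ n0).1) := by
      intro j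
      have h2 := (ρ (max j n0)).2.2
      rw [Set.mem_Icc] at h2 ⊢
      exact ⟨h2.1, h2.2.trans_eq (congrArg ℓ (hedge _ (le_max_right _ _)))⟩
    have hyI : y ∈ Set.Icc (0 : ℝ) (ℓ (ρ n0).1) :=
      isClosed_Icc.mem_of_tendsto hy (Filter.Eventually.of_forall hmem)
    refine ⟨Quotient.mk r ⟨(ρ n0).1, ⟨y, hyI⟩⟩, ?_⟩
    have hbd : ∀ n, n0 ≤ n →
        dG ℓ r (ξ n) (Quotient.mk r ⟨(ρ n0).1, ⟨y, hyI⟩⟩) ≤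
          ENNReal.ofReal |(ρ n).2.1 - y| := by
      intro n hn
      have := dG_le_dE (r := r) (hρ n)
        (rfl : Quotient.mk r ⟨(ρ n0).1, ⟨y, hyI⟩⟩ = Quotient.mk r ⟨(ρ n0).1, ⟨y, hyI⟩⟩)
      rwa [dE_eq' (p := ρ n) (q := ⟨(ρ n0).1, ⟨y, hyI⟩⟩) (hedge n hn)] at this
    have habs : Filter.Tendsto (fun n => |u n - y|) Filter.atTop (nhds 0) := by
      have h1 := (hy.sub_const y).abs
      simpa using h1
    have hupper : Filter.Tendsto (fun n => ENNReal.ofReal |u n - y|) Filter.atTop (nhds 0) := by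
      have := ENNReal.tendsto_ofReal habs
      simpa using this
    apply tendsto_of_tendsto_of_tendsto_of_le_of_le' tendsto_const_nhds hupper
    · exact Filter.Eventually.of_forall (fun n => zero_le)
    · filter_upwards [Filter.eventually_ge_atTop n0] with n hn
      have h1 := hbd n hn
      have h2 : u n = (ρ n).2.1 := by
        show (ρ (max n n0)).2.1 = (ρ n).2.1
        rw [max_eq_left hn]
      rw [h2]
      exact h1
  · -- Case A : the sequence accumulates at a vertex
    push_neg at hB
    set δ := ENNReal.ofReal (c / 8) with hδdef
    have hδ0 : 0 < δ := ENNReal.ofReal_pos.mpr (by linarith)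
    have hδC : δ < ENNReal.ofReal c :=
      (ENNReal.ofReal_lt_ofReal_iff hc0).mpr (by linarith)
    obtain ⟨N1, hN1⟩ := hcau δ hδ0
    obtain ⟨n1, hn1, w1, hw1V, hw1⟩ := hB δ hδ0 hδC N1
    refine ⟨Quotient.mk r w1, ?_⟩
    rw [ENNReal.tendsto_nhds_zero]
    intro ε hε
    set η := (min ε δ) / 2 with hη
    have hη0 : 0 < η := ENNReal.half_pos (lt_min hε hδ0).ne'
    have hηδ : η ≤ δ := le_trans (ENNReal.half_le_self) (min_le_right _ _)
    have hηC : η < ENNReal.ofReal c := lt_of_le_of_lt hηδ hδC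
    obtain ⟨N2, hN2⟩ := hcau η hη0
    obtain ⟨n2, hn2, w2, hw2V, hw2⟩ := hB η hη0 hηC (max N1 N2)
    have hn2N1 : N1 ≤ n2 := le_trans (le_max_left _ _) hn2
    have hn2N2 : N2 ≤ n2 := le_trans (le_max_right _ _) hn2
    have hvw : Quotient.mk r w1 = Quotient.mk r w2 := by
      apply vertex_sep hc0 hcle hr hw1V hw2V
      calc dG ℓ r (Quotient.mk r w1) (Quotient.mk r w2)
          ≤ dG ℓ r (Quotient.mk r w1) (ξ n1) + dG ℓ r (ξ n1) (Quotient.mk r w2) :=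
            dG_triangle _ _ _
        _ ≤ dG ℓ r (Quotient.mk r w1) (ξ n1) +
             (dG ℓ r (ξ n1) (ξ n2) + dG ℓ r (ξ n2) (Quotient.mk r w2)) :=
            add_le_add le_rfl (dG_triangle _ _ _)
        _ < δ + (δ + δ) := by
            apply ENNReal.add_lt_add
            · rw [← dG_symm]; exact hw1
            · exact ENNReal.add_lt_add (hN1 n1 n2 hn1 hn2N1) (lt_of_lt_of_le hw2 hηδ)
        _ < ENNReal.ofReal c := by
            rw [hδdef, ← ENNReal.ofReal_add (by linarith) (by linarith),
              ← ENNReal.ofReal_add (by linarith) (by linarith)]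
            exact (ENNReal.ofReal_lt_ofReal_iff hc0).mpr (by linarith)
    rw [hvw]
    filter_upwards [Filter.eventually_ge_atTop (max N1 N2)] with m hm
    have hmN2 : N2 ≤ m := le_trans (le_max_right _ _) hm
    calc dG ℓ r (ξ m) (Quotient.mk r w2)
        ≤ dG ℓ r (ξ m) (ξ n2) + dG ℓ r (ξ n2) (Quotient.mk r w2) := dG_triangle _ _ _
      _ ≤ η + η := add_le_add (hN2 m n2 hmN2 hn2N2).le hw2.le
      _ = min ε δ := ENNReal.add_halves _
      _ ≤ ε := min_le_left _ _
end

section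
/- Suppose there exists c > 0 with c ≤ ℓ e for all e ∈ E and every equivalence class of ∼ is a finite set. Let λ_e denote Lebesgue measure on ℝ restricted to [0, ℓ e], transported to the summand {e} × Icc 0 (ℓ e) of 𝓔, and let μ := q_*(Σ_e λ_e) be the pushforward to G (with the Borel σ-algebra of the quotient topology) of the sum measure. Then μ is locally finite: every point ξ ∈ G has an open neighborhood U with μ(U) < ∞. -/
open MeasureTheory
open scoped ENNReal

/-- Metric ball of radius `ε` around `m` inside its own summand. -/
def Bset {E : Type*} (ℓ : E → ℝ) (ε : ℝ) (m : Σ e : E, Set.Icc (0 : ℝ) (ℓ e)) :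
    Set (Σ e : E, Set.Icc (0 : ℝ) (ℓ e)) :=
  Sigma.mk m.1 '' (Subtype.val ⁻¹' Metric.ball (m.2 : ℝ) ε)

lemma isOpen_Bset {E : Type*} (ℓ : E → ℝ) (ε : ℝ) (m : Σ e : E, Set.Icc (0 : ℝ) (ℓ e)) :
    IsOpen (Bset ℓ ε m) :=
  (Topology.IsOpenEmbedding.sigmaMk).isOpenMap _ (Metric.isOpen_ball.preimage continuous_subtype_val)

lemma mem_Bset_self {E : Type*} (ℓ : E → ℝ) {ε : ℝ} (hε : 0 < ε)
    (m : Σ e : E, Set.Icc (0 : ℝ) (ℓ e)) : m ∈ Bset ℓ ε m :=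
  ⟨m.2, by simpa using hε, Sigma.eta m⟩

lemma Bset_dest {E : Type*} {ℓ : E → ℝ} {ε : ℝ} {m z : Σ e : E, Set.Icc (0 : ℝ) (ℓ e)}
    (hz : z ∈ Bset ℓ ε m) : z.1 = m.1 ∧ |(z.2 : ℝ) - (m.2 : ℝ)| < ε := by
  obtain ⟨x, hx, rfl⟩ := hz
  exact ⟨rfl, by rw [Set.mem_preimage, Metric.mem_ball, Real.dist_eq] at hx; exact hx⟩

lemma Bset_preimage_ne {E : Type*} {ℓ : E → ℝ} {ε : ℝ} {m : Σ e : E, Set.Icc (0 : ℝ) (ℓ e)}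
    {e : E} (he : e ≠ m.1) :
    (fun x => (⟨e, x⟩ : Σ e : E, Set.Icc (0 : ℝ) (ℓ e))) ⁻¹' Bset ℓ ε m = ∅ := by
  ext x
  simp only [Set.mem_preimage, Set.mem_empty_iff_false, iff_false]
  intro hx
  exact he (Bset_dest hx).1

/-- Suppose the edge lengths are uniformly bounded below and every equivalence class of
`∼` is finite.  Equip `𝓔` and `G` with their Borel σ-algebras, let `λ_e` be Lebesgue
measure on `[0, ℓ e]` transported to the summand `{e} × [0, ℓ e]` of `𝓔`, and let
`μ := q_*(Σ_e λ_e)` be the pushforward to `G` of the sum measure.  Then `μ` is locally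
finite: every point of `G` has an open neighborhood of finite measure. -/
theorem stmt10 {E : Type*} [Countable E] (ℓ : E → ℝ) (hℓ : ∀ e, 0 < ℓ e)
    (r : Setoid (Σ e : E, Set.Icc (0 : ℝ) (ℓ e)))
    (hr : ∀ p q, r p q → p = q ∨ (p ∈ Vset ℓ ∧ q ∈ Vset ℓ))
    (hc : ∃ c > (0 : ℝ), ∀ e, c ≤ ℓ e)
    (hfin : ∀ p, {q | r p q}.Finite) :
    letI : MeasurableSpace (Σ e : E, Set.Icc (0 : ℝ) (ℓ e)) := borel _
    letI : MeasurableSpace (Quotient r) := borel _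
    ∀ ξ : Quotient r, ∃ U : Set (Quotient r), IsOpen U ∧ ξ ∈ U ∧
      Measure.map (Quotient.mk r)
        (Measure.sum fun e =>
          Measure.map (fun x => (⟨e, x⟩ : Σ e : E, Set.Icc (0 : ℝ) (ℓ e)))
            ((volume : Measure ℝ).comap Subtype.val : Measure (Set.Icc (0 : ℝ) (ℓ e)))) U < ⊤ := by
  letI mE : MeasurableSpace (Σ e : E, Set.Icc (0 : ℝ) (ℓ e)) := borel _
  letI mQ : MeasurableSpace (Quotient r) := borel _
  haveI hBE : @BorelSpace (Σ e : E, Set.Icc (0 : ℝ) (ℓ e)) _ mE := ⟨rfl⟩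
  haveI hBQ : @BorelSpace (Quotient r) _ mQ := ⟨rfl⟩
  intro ξ
  classical
  obtain ⟨c, hc0, hcle⟩ := hc
  obtain ⟨p, rfl⟩ := Quotient.exists_rep ξ
  -- choose a good radius
  obtain ⟨ε, hε0, hVint⟩ :
      ∃ ε > (0 : ℝ), ∀ m, r p m → ∀ z ∈ Bset ℓ ε m, z ∈ Vset ℓ → r p z := by
    by_cases hp : p ∈ Vset ℓ
    · refine ⟨c, hc0, ?_⟩
      intro m hpm z hz hzV
      obtain ⟨h1, h2⟩ := Bset_dest hz
      have hmV : m ∈ Vset ℓ := by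
        rcases hr p m hpm with h | h
        · exact h ▸ hp
        · exact h.2
      have hzm : z = m := by
        have hz2 : (z.2 : ℝ) = (m.2 : ℝ) := by
          have hℓm : c ≤ ℓ m.1 := hcle m.1
          have hℓz : c ≤ ℓ z.1 := hcle z.1
          rcases hzV with hz0 | hzl <;> rcases hmV with hm0 | hml
          · rw [hz0, hm0]
          · exfalso; rw [hz0, hml] at h2
            rw [abs_sub_comm, abs_of_nonneg (by linarith [(hℓ m.1)])] at h2
            linarith
          · exfalso; rw [hzl, hm0, h1] at h2
            rw [abs_of_nonneg (by linarith [(hℓ m.1)])] at h2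
            linarith
          · rw [hzl, hml, h1]
        cases z with
        | mk ze zx =>
          cases m with
          | mk me mx =>
            cases h1
            simp only at hz2
            exact congrArg _ (Subtype.ext hz2)
      rw [hzm]; exact hpm
    · have hp0 : (0 : ℝ) < (p.2 : ℝ) := lt_of_le_of_ne p.2.2.1 (by
        intro h; exact hp (Or.inl h.symm))
      have hpl : (p.2 : ℝ) < ℓ p.1 := lt_of_le_of_ne p.2.2.2 (by
        intro h; exact hp (Or.inr h))
      refine ⟨min (p.2 : ℝ) (ℓ p.1 - (p.2 : ℝ)), lt_min hp0 (by linarith), ?_⟩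
      intro m hpm z hz hzV
      have hmp : m = p := by
        rcases hr p m hpm with h | h
        · exact h.symm
        · exact absurd h.1 hp
      subst hmp
      obtain ⟨h1, h2⟩ := Bset_dest hz
      exfalso
      rcases hzV with hz0 | hzl
      · rw [hz0] at h2
        have h3 := (abs_lt.1 h2).1
        have := min_le_left ((m.2 : ℝ)) (ℓ m.1 - (m.2 : ℝ))
        linarith
      · rw [hzl, h1] at h2
        have h3 := (abs_lt.1 h2).2
        have := min_le_right ((m.2 : ℝ)) (ℓ m.1 - (m.2 : ℝ))
        linarith
  -- the saturated open set
  set C : Set (Σ e : E, Set.Icc (0 : ℝ) (ℓ e)) := {q | r p q} with hC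
  set V : Set (Σ e : E, Set.Icc (0 : ℝ) (ℓ e)) := ⋃ m ∈ C, Bset ℓ ε m with hV
  have hVopen : IsOpen V := isOpen_biUnion fun m _ => isOpen_Bset ℓ ε m
  have hpV : p ∈ V := Set.mem_biUnion (r.refl p) (mem_Bset_self ℓ hε0 p)
  have hCV : C ⊆ V := fun m hm => Set.mem_biUnion hm (mem_Bset_self ℓ hε0 m)
  have hsat : Quotient.mk r ⁻¹' (Quotient.mk r '' V) = V := by
    refine Set.Subset.antisymm ?_ (Set.subset_preimage_image _ _)
    rintro x hx
    obtain ⟨z, hzV, hzx⟩ := hx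
    have hzxr : r z x := Quotient.exact hzx
    obtain ⟨m, hm, hzB⟩ := Set.mem_iUnion₂.1 hzV
    by_cases hzVs : z ∈ Vset ℓ
    · have hpz : r p z := hVint m hm z hzB hzVs
      exact hCV (r.trans hpz hzxr)
    · rcases hr z x hzxr with h | h
      · exact h ▸ hzV
      · exact absurd h.1 hzVs
  have hUopen : IsOpen (Quotient.mk r '' V) := by
    rw [← isQuotientMap_quotient_mk'.isOpen_preimage]
    show IsOpen (Quotient.mk r ⁻¹' _)
    rw [hsat]; exact hVopen
  refine ⟨Quotient.mk r '' V, hUopen, ⟨p, hpV, rfl⟩, ?_⟩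
  have hqm : @Measurable _ _ mE mQ (Quotient.mk r) :=
    @Continuous.measurable _ _ _ mE _ _ mQ hBQ _ continuous_quot_mk
  have hUm : @MeasurableSet _ mQ (Quotient.mk r '' V) := by
    exact hUopen.measurableSet
  have hVm : @MeasurableSet _ mE V := by exact hVopen.measurableSet
  rw [Measure.map_apply hqm hUm, hsat, Measure.sum_apply _ hVm]
  have hemb : ∀ e : E, @MeasurableEmbedding (Set.Icc (0 : ℝ) (ℓ e)) _ _ mE
      (fun x => (⟨e, x⟩ : Σ e : E, Set.Icc (0 : ℝ) (ℓ e))) := fun e =>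
    @Topology.IsOpenEmbedding.measurableEmbedding _ _ _ _ _ _ mE hBE _
      (Topology.IsOpenEmbedding.sigmaMk (σ := fun e => Set.Icc (0 : ℝ) (ℓ e)) (i := e))
  have hterm : ∀ e : E,
      Measure.map (fun x => (⟨e, x⟩ : Σ e : E, Set.Icc (0 : ℝ) (ℓ e)))
        ((volume : Measure ℝ).comap Subtype.val) V
      = (volume : Measure ℝ)
          (Subtype.val '' ((fun x => (⟨e, x⟩ : Σ e : E, Set.Icc (0 : ℝ) (ℓ e))) ⁻¹' V)) := by
    intro e
    rw [(hemb e).map_apply,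
      (MeasurableEmbedding.subtype_coe measurableSet_Icc).comap_apply]
  have hCfin : C.Finite := hfin p
  set F : Finset E := hCfin.toFinset.image Sigma.fst with hF
  have hzero : ∀ e ∉ F,
      Measure.map (fun x => (⟨e, x⟩ : Σ e : E, Set.Icc (0 : ℝ) (ℓ e)))
        ((volume : Measure ℝ).comap Subtype.val) V = 0 := by
    intro e he
    rw [hterm e]
    have : (fun x => (⟨e, x⟩ : Σ e : E, Set.Icc (0 : ℝ) (ℓ e))) ⁻¹' V = ∅ := by
      rw [hV, Set.preimage_iUnion₂]
      refine Set.iUnion_eq_empty.2 fun m => Set.iUnion_eq_empty.2 fun hm => ?_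
      refine Bset_preimage_ne fun hme => ?_
      exact he (Finset.mem_image.2 ⟨m, hCfin.mem_toFinset.2 hm, hme.symm⟩)
    rw [this]
    simp
  rw [tsum_eq_sum hzero]
  refine ENNReal.sum_lt_top.2 fun e _ => ?_
  rw [hterm e]
  refine lt_of_le_of_lt (measure_mono ?_) (measure_Icc_lt_top (a := (0:ℝ)) (b := ℓ e))
  rintro x ⟨y, _, rfl⟩
  exact y.2
end
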